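/- Let E ⊆ ℝ^d and h ∈ 𝒟. If 0 < 𝒫^h(E) and E is a countable union of sets of finite 𝒫^h measure (i.e., 𝒫^h restricted to E is σ-finite and nontrivial), then 𝒫^f(E) = 0 for every f ∈ 𝒟 with h ≺ f. -/

import Mathlib

open Set Metric Filter Topology
open scoped ENNReal

/-- `h` is a dimension function: continuous and nondecreasing on `(0,∞)`, positive
there, and tending to `0` as `t → 0⁺`. -/
def IsDimFun (h : ℝ → ℝ) : Prop :=
  ContinuousOn h (Ioi 0) ∧ MonotoneOn h (Ioi 0) ∧ (∀ t, 0 < t → 0 < h t) ∧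
    Tendsto h (𝓝[>] (0:ℝ)) (𝓝 0)

/-- `g ≺ h` : `g` is a smaller dimension than `h`, i.e. `lim_{t→0⁺} h(t)/g(t) = 0`. -/
def DimLT (g h : ℝ → ℝ) : Prop :=
  Tendsto (fun t => h t / g t) (𝓝[>] (0:ℝ)) (𝓝 0)

/-- `h ∈ 𝒟_d`: `h` is a doubling, at most `d`-dimensional dimension function. -/
def IsDimFunD (d : ℕ) (h : ℝ → ℝ) : Prop :=
  IsDimFun h ∧ (∃ c₀ > (0:ℝ), ∀ t > (0:ℝ), t ^ d ≤ c₀ * h t) ∧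
    ∃ c₁ > (0:ℝ), ∀ t > (0:ℝ), h (2 * t) ≤ c₁ * h t

/-- `P_δ^h(E)`: supremum of `∑ h(|Bᵢ|)` over countable `δ`-packings of `E`, where a
`δ`-packing is a countable collection of pairwise disjoint open balls centered at
points of `E` with diameters (`= 2r`) less than `δ`. -/
noncomputable def packingPre (d : ℕ) (h : ℝ → ℝ) (δ : ℝ)
    (E : Set (EuclideanSpace ℝ (Fin d))) : ℝ≥0∞ :=
  ⨆ (c : ℕ → EuclideanSpace ℝ (Fin d)) (r : ℕ → ℝ) (s : Set ℕ)
    (_ : ∀ i ∈ s, c i ∈ E) (_ : ∀ i ∈ s, 0 < r i) (_ : ∀ i ∈ s, 2 * r i < δ)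
    (_ : s.PairwiseDisjoint fun i => ball (c i) (r i)),
    ∑' i : s, ENNReal.ofReal (h (2 * r (i : ℕ)))

/-- The packing premeasure `P_0^h(E) = inf_{δ>0} P_δ^h(E)`. -/
noncomputable def packingPre0 (d : ℕ) (h : ℝ → ℝ)
    (E : Set (EuclideanSpace ℝ (Fin d))) : ℝ≥0∞ :=
  ⨅ (δ : ℝ) (_ : 0 < δ), packingPre d h δ E

/-- The packing measure `𝒫^h(E)`. -/
noncomputable def packingMeasure (d : ℕ) (h : ℝ → ℝ)
    (E : Set (EuclideanSpace ℝ (Fin d))) : ℝ≥0∞ :=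
  ⨅ (F : ℕ → Set (EuclideanSpace ℝ (Fin d))) (_ : E ⊆ ⋃ j, F j),
    ∑' j, packingPre0 d h (F j)

/-- `E` has non-σ-finite `𝒫^h` measure: `E` is not a countable union of sets of
finite `𝒫^h` measure. -/
def NonSigmaFinitePacking (d : ℕ) (h : ℝ → ℝ)
    (E : Set (EuclideanSpace ℝ (Fin d))) : Prop :=
  ¬ ∃ F : ℕ → Set (EuclideanSpace ℝ (Fin d)),
      E ⊆ ⋃ j, F j ∧ ∀ j, packingMeasure d h (F j) < ⊤

/-- `A ⊆ ℝ^d` is analytic: a continuous image of `ℕ^ℕ`. -/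
def IsAnalyticSet' (d : ℕ) (A : Set (EuclideanSpace ℝ (Fin d))) : Prop :=
  ∃ φ : (ℕ → ℕ) → EuclideanSpace ℝ (Fin d), Continuous φ ∧ A = Set.range φ


lemma packingPre_mono_delta (d : ℕ) (h : ℝ → ℝ) {δ₁ δ₂ : ℝ} (hδ : δ₁ ≤ δ₂)
    (E : Set (EuclideanSpace ℝ (Fin d))) :
    packingPre d h δ₁ E ≤ packingPre d h δ₂ E := by
  refine iSup_le fun c => iSup_le fun r => iSup_le fun s => iSup_le fun hc => iSup_le fun hr =>
    iSup_le fun hlt => iSup_le fun hd => ?_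
  exact le_iSup_of_le c (le_iSup_of_le r (le_iSup_of_le s (le_iSup_of_le hc (le_iSup_of_le hr
    (le_iSup_of_le (fun i hi => lt_of_lt_of_le (hlt i hi) hδ) (le_iSup_of_le hd le_rfl))))))

lemma packingPre_le_mul (d : ℕ) (h f : ℝ → ℝ) (δ ε : ℝ) (hε : 0 ≤ ε)
    (hfh : ∀ t, 0 < t → t < δ → f t ≤ ε * h t) (A : Set (EuclideanSpace ℝ (Fin d))) :
    packingPre d f δ A ≤ ENNReal.ofReal ε * packingPre d h δ A := by
  refine iSup_le fun c => iSup_le fun r => iSup_le fun s => iSup_le fun hc => iSup_le fun hr =>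
    iSup_le fun hlt => iSup_le fun hd => ?_
  have h1 : (∑' i : s, ENNReal.ofReal (f (2 * r (i : ℕ)))) ≤
      ∑' i : s, ENNReal.ofReal ε * ENNReal.ofReal (h (2 * r (i : ℕ))) := by
    refine ENNReal.tsum_le_tsum fun i => ?_
    rw [← ENNReal.ofReal_mul hε]
    exact ENNReal.ofReal_le_ofReal
      (hfh _ (by have := hr i i.2; linarith) (hlt i i.2))
  rw [ENNReal.tsum_mul_left] at h1
  refine h1.trans (mul_le_mul_right ?_ _)
  exact le_iSup_of_le c (le_iSup_of_le r (le_iSup_of_le s (le_iSup_of_le hc (le_iSup_of_le hr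
    (le_iSup_of_le hlt (le_iSup_of_le hd le_rfl))))))

lemma packingPre0_zero_of_dimLT (d : ℕ) (h f : ℝ → ℝ)
    (hpos : ∀ t, 0 < t → 0 < h t) (hlt : DimLT h f)
    (A : Set (EuclideanSpace ℝ (Fin d))) (hfin : packingPre0 d h A ≠ ⊤) :
    packingPre0 d f A = 0 := by
  set C := packingPre0 d h A with hC
  have hM : C + 1 ≠ ⊤ := by simp [ENNReal.add_ne_top, hfin]
  have hM0 : C + 1 ≠ 0 := by simp
  have key : ∀ ε : ℝ, 0 < ε → packingPre0 d f A ≤ ENNReal.ofReal ε * (C + 1) := by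
    intro ε hε
    have h1 : ∀ᶠ t in 𝓝[>] (0:ℝ), f t / h t < ε := hlt.eventually (eventually_lt_nhds hε)
    obtain ⟨δ', hδ'mem, hδ'sub⟩ := mem_nhdsGT_iff_exists_Ioo_subset.mp h1
    have hfh : ∀ t, 0 < t → t < δ' → f t ≤ ε * h t := by
      intro t ht htδ
      have := hδ'sub ⟨ht, htδ⟩
      exact le_of_lt ((div_lt_iff₀ (hpos t ht)).mp this)
    have hlt1 : C < C + 1 := ENNReal.lt_add_right hfin one_ne_zero
    have h2 : (⨅ (δ : ℝ) (_ : 0 < δ), packingPre d h δ A) < C + 1 := hlt1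
    rw [iInf_lt_iff] at h2
    obtain ⟨δ, hδ⟩ := h2
    rw [iInf_lt_iff] at hδ
    obtain ⟨hδpos, hδlt⟩ := hδ
    have hδ'pos : (0:ℝ) < δ' := hδ'mem
    set δ₀ := min δ δ' with hδ₀
    have hδ₀pos : 0 < δ₀ := lt_min hδpos hδ'pos
    calc packingPre0 d f A ≤ packingPre d f δ₀ A := iInf₂_le δ₀ hδ₀pos
      _ ≤ ENNReal.ofReal ε * packingPre d h δ₀ A :=
          packingPre_le_mul d h f δ₀ ε hε.le
            (fun t ht htδ => hfh t ht (lt_of_lt_of_le htδ (min_le_right _ _))) A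
      _ ≤ ENNReal.ofReal ε * packingPre d h δ A :=
          mul_le_mul_right (packingPre_mono_delta d h (min_le_left _ _) A) _
      _ ≤ ENNReal.ofReal ε * (C + 1) := mul_le_mul_right hδlt.le _
  refine le_antisymm (ENNReal.le_of_forall_pos_le_add fun ε hε _ => ?_) zero_le
  rw [zero_add]
  set ε' := ((ε : ℝ≥0∞) / (C + 1)).toReal with hε'
  have hεne : (ε : ℝ≥0∞) ≠ 0 := by exact_mod_cast hε.ne'
  have hdivne : (ε : ℝ≥0∞) / (C + 1) ≠ ⊤ := by
    simp [ENNReal.div_eq_top, hM0, hM]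
  have hdivpos : (0:ℝ≥0∞) < (ε : ℝ≥0∞) / (C + 1) :=
    ENNReal.div_pos hεne hM
  have hε'pos : 0 < ε' := ENNReal.toReal_pos hdivpos.ne' hdivne
  have hkey := key ε' hε'pos
  rwa [hε', ENNReal.ofReal_toReal hdivne, ENNReal.div_mul_cancel hM0 hM] at hkey

/-- if the restriction of the packing measure to `E` is σ-finite and
nontrivial, then `E` is `𝒫^f`-null whenever `h ≺ f`. -/
theorem packing_zero_of_sigmaFinite_of_dimLT (d : ℕ) (h : ℝ → ℝ) (hh : IsDimFun h)
    (E : Set (EuclideanSpace ℝ (Fin d))) (hpos : 0 < packingMeasure d h E)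
    (hsf : ∃ F : ℕ → Set (EuclideanSpace ℝ (Fin d)),
      E ⊆ ⋃ j, F j ∧ ∀ j, packingMeasure d h (F j) < ⊤)
    (f : ℝ → ℝ) (hf : IsDimFun f) (hlt : DimLT h f) :
    packingMeasure d f E = 0 := by
  obtain ⟨F, hFcov, hFfin⟩ := hsf
  have hG : ∀ j, ∃ G : ℕ → Set (EuclideanSpace ℝ (Fin d)),
      F j ⊆ ⋃ k, G k ∧ ∑' k, packingPre0 d h (G k) < ⊤ := by
    intro j
    have h1 : (⨅ (G : ℕ → Set (EuclideanSpace ℝ (Fin d))) (_ : F j ⊆ ⋃ k, G k),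
        ∑' k, packingPre0 d h (G k)) < ⊤ := hFfin j
    rw [iInf_lt_iff] at h1
    obtain ⟨G, hG⟩ := h1
    rw [iInf_lt_iff] at hG
    obtain ⟨hsub, hfin⟩ := hG
    exact ⟨G, hsub, hfin⟩
  choose G hGcov hGfin using hG
  set H : ℕ → Set (EuclideanSpace ℝ (Fin d)) :=
    fun n => G n.unpair.1 n.unpair.2 with hH
  have hHcov : E ⊆ ⋃ n, H n := by
    intro x hx
    obtain ⟨j, hj⟩ := mem_iUnion.mp (hFcov hx)
    obtain ⟨k, hk⟩ := mem_iUnion.mp (hGcov j hj)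
    exact mem_iUnion.mpr ⟨Nat.pair j k, by simpa [hH, Nat.unpair_pair] using hk⟩
  have hzero : ∀ n, packingPre0 d f (H n) = 0 := by
    intro n
    refine packingPre0_zero_of_dimLT d h f hh.2.2.1 hlt _ ?_
    exact (ENNReal.lt_top_of_tsum_ne_top (hGfin n.unpair.1).ne n.unpair.2).ne
  have hle : packingMeasure d f E ≤ ∑' n, packingPre0 d f (H n) := iInf₂_le H hHcov
  simpa [hzero] using hle
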